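/- In a DFS tree T of a connected undirected graph G, a tree edge (x,y) with x = parent(y) is a bridge of G if and only if the high-point of y equals dfn(y). -/
import Mathlib
open Classical Finset

structure RTree (V : Type*) where
  parent : V → V
  root : V
  parent_root : parent root = root
  reaches : ∀ v : V, ∃ k : ℕ, parent^[k] v = root

namespace RTree

variable {V : Type*}

/-- `u` is an ancestor of `v` (or `u = v`) in the rooted tree `T`. -/
def IsAncestor (T : RTree V) (u v : V) : Prop :=
  ∃ k : ℕ, T.parent^[k] v = u

/-- depth of a vertex: distance (number of edges) from the root. -/
noncomputable def depth (T : RTree V) (v : V) : ℕ :=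
  Nat.find (T.reaches v)

/-- number of vertices in the subtree rooted at `v`. -/
noncomputable def subtreeSize [Fintype V] (T : RTree V) (v : V) : ℕ :=
  (Finset.univ.filter fun u => T.IsAncestor v u).card

end RTree

/-- A heavy-light decomposition of a rooted tree: `heavy c` means the edge
from `parent c` to `c` is marked heavy (solid). -/
structure HLDecomp {V : Type*} [Fintype V] (T : RTree V) where
  heavy : V → Prop
  heavy_ne_root : ∀ c, heavy c → c ≠ T.root
  heavy_max : ∀ c c', heavy c → T.parent c' = T.parent c → c' ≠ T.parent c' →
      T.subtreeSize c' ≤ T.subtreeSize c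
  heavy_exists : ∀ u : V, (∃ c, T.parent c = u ∧ c ≠ u) → ∃ c, T.parent c = u ∧ c ≠ u ∧ heavy c
  heavy_unique : ∀ c c', heavy c → heavy c' → T.parent c = T.parent c' → c = c'

/-- number of light (dashed) edges on the tree path from the root to `v`. -/
noncomputable def lightCount {V : Type*} [Fintype V] (T : RTree V) (H : HLDecomp T) (v : V) : ℕ :=
  (Finset.univ.filter fun u => T.IsAncestor u v ∧ u ≠ T.root ∧ ¬ H.heavy u).card

/-- The high-point of a vertex `c`: the minimum dfn among `dfn c` and the dfn's of proper
ancestors reached by back edges (non-tree edges of `G`) from vertices in the subtree of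
`c`. -/
noncomputable def highPoint {n : ℕ} (G : SimpleGraph (Fin n)) (T : RTree (Fin n))
    (ord : Fin n ≃ Fin n) (c : Fin n) : WithTop ℕ :=
  ((Finset.univ.filter fun w => w = c ∨
      ∃ u : Fin n, T.IsAncestor c u ∧ G.Adj u w ∧ T.IsAncestor w u ∧ w ≠ u ∧
        T.parent u ≠ w).image fun w => (ord w : ℕ)).min

namespace RTree

variable {V : Type*} (T : RTree V)

lemma isAncestor_refl (v : V) : T.IsAncestor v v := ⟨0, rfl⟩

lemma isAncestor_trans {a b c : V} (h1 : T.IsAncestor a b) (h2 : T.IsAncestor b c) :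
    T.IsAncestor a c := by
  obtain ⟨k, hk⟩ := h1; obtain ⟨m, hm⟩ := h2
  exact ⟨k + m, by rw [Function.iterate_add_apply, hm, hk]⟩

lemma isAncestor_parent (v : V) : T.IsAncestor (T.parent v) v := ⟨1, rfl⟩

lemma isAncestor_parent_of_ne {a b : V} (h : T.IsAncestor a b) (hne : a ≠ b) :
    T.IsAncestor a (T.parent b) := by
  obtain ⟨k, hk⟩ := h
  cases k with
  | zero => exact absurd hk.symm hne
  | succ m => exact ⟨m, by rw [← Function.iterate_succ_apply]; exact hk⟩

lemma iterate_root (k : ℕ) : T.parent^[k] T.root = T.root := by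
  induction k with
  | zero => rfl
  | succ m ih => rw [Function.iterate_succ_apply', ih, T.parent_root]

lemma eq_root_of_isAncestor {a : V} (h : T.IsAncestor a T.root) : a = T.root := by
  obtain ⟨k, hk⟩ := h; rw [T.iterate_root] at hk; exact hk.symm

lemma isAncestor_comparable {a b c : V} (h1 : T.IsAncestor a c) (h2 : T.IsAncestor b c) :
    T.IsAncestor a b ∨ T.IsAncestor b a := by
  obtain ⟨k, hk⟩ := h1; obtain ⟨m, hm⟩ := h2
  rcases le_total k m with h | h
  · right
    exact ⟨m - k, by rw [← hk, ← Function.iterate_add_apply, Nat.sub_add_cancel h, hm]⟩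
  · left
    exact ⟨k - m, by rw [← hm, ← Function.iterate_add_apply, Nat.sub_add_cancel h, hk]⟩

end RTree

lemma dfn_strict {n : ℕ} (T : RTree (Fin n)) (ord : Fin n ≃ Fin n)
    (hroot : (ord T.root : ℕ) = 0)
    (hdfs : ∀ i j : Fin n, (i : ℕ) = (j : ℕ) + 1 →
      T.IsAncestor (T.parent (ord.symm i)) (ord.symm j)) :
    ∀ (j : ℕ) (v : Fin n), (ord v : ℕ) = j → ∀ a, T.IsAncestor a v → a ≠ v →
      (ord a : ℕ) < (ord v : ℕ) := by
  intro j
  induction j using Nat.strong_induction_on with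
  | _ j ih =>
    intro v hv a hav hne
    cases j with
    | zero =>
      have hv' : v = T.root := by
        apply ord.injective
        exact Fin.ext (by omega)
      exact absurd (T.eq_root_of_isAncestor (hv' ▸ hav)) (hv' ▸ hne)
    | succ m =>
      have hmn : m < n := by omega
      set jm : Fin n := ⟨m, hmn⟩ with hjm
      have panc : T.IsAncestor (T.parent v) (ord.symm jm) := by
        have := hdfs (ord v) jm (by simp [hjm, hv])
        simpa using this
      have hanc_u : T.IsAncestor a (ord.symm jm) :=
        T.isAncestor_trans (T.isAncestor_parent_of_ne hav hne) panc
      have hordu : (ord (ord.symm jm) : ℕ) = m := by simp [hjm]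
      by_cases hau : a = ord.symm jm
      · rw [hau, hordu]; omega
      · have := ih m (by omega) (ord.symm jm) hordu a hanc_u hau
        omega

/-- In a DFS tree `T` of a connected undirected graph `G`, a tree edge
`(x, y)` with `x = parent y` is a bridge of `G` (its removal disconnects `G`) if and only
if the high-point of `y` equals `dfn y`. -/
theorem bridge_iff_highpoint {n : ℕ} (G : SimpleGraph (Fin n)) (hG : G.Connected)
    (T : RTree (Fin n)) (ord : Fin n ≃ Fin n)
    (hroot : (ord T.root : ℕ) = 0)
    (hspan : ∀ v : Fin n, v ≠ T.root → G.Adj (T.parent v) v)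
    (hdfs : ∀ i j : Fin n, (i : ℕ) = (j : ℕ) + 1 →
      T.IsAncestor (T.parent (ord.symm i)) (ord.symm j))
    (hdfsProp : ∀ a b : Fin n, G.Adj a b → T.IsAncestor a b ∨ T.IsAncestor b a)
    (x y : Fin n) (hxy : T.parent y = x) (hyx : y ≠ x) :
    ¬ (G.deleteEdges {s(x, y)}).Connected ↔
      highPoint G T ord y = ((ord y : ℕ) : WithTop ℕ) := by
  set G' := G.deleteEdges {s(x, y)} with hG'def
  have dfnlt : ∀ a v : Fin n, T.IsAncestor a v → a ≠ v → (ord a : ℕ) < (ord v : ℕ) :=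
    fun a v hav hne => dfn_strict T ord hroot hdfs (ord v) v rfl a hav hne
  have antisymm : ∀ a b : Fin n, T.IsAncestor a b → T.IsAncestor b a → a = b := by
    intro a b h1 h2
    by_contra hne
    have h3 := dfnlt a b h1 hne
    have h4 := dfnlt b a h2 (Ne.symm hne)
    omega
  have hyancx : ¬ T.IsAncestor y x := fun h =>
    hyx (antisymm y x h (hxy ▸ T.isAncestor_parent y))
  set S := (Finset.univ.filter fun w => w = y ∨
      ∃ u : Fin n, T.IsAncestor y u ∧ G.Adj u w ∧ T.IsAncestor w u ∧ w ≠ u ∧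
        T.parent u ≠ w) with hSdef
  have hpS : highPoint G T ord y = (S.image fun w => ((ord w : ℕ))).min := rfl
  have hyS : y ∈ S := by simp [hSdef]
  have hp_eq : highPoint G T ord y = ((ord y : ℕ) : WithTop ℕ) ↔
      ∀ w ∈ S, (ord y : ℕ) ≤ (ord w : ℕ) := by
    rw [hpS]
    constructor
    · intro h w hw
      have h2 : (S.image fun w => ((ord w : ℕ))).min ≤ ((ord w : ℕ) : WithTop ℕ) :=
        Finset.min_le (Finset.mem_image_of_mem _ hw)
      rw [h] at h2
      exact_mod_cast h2
    · intro h
      refine le_antisymm (Finset.min_le (Finset.mem_image_of_mem _ hyS)) ?_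
      refine Finset.le_min ?_
      intro b hb
      obtain ⟨w, hw, rfl⟩ := Finset.mem_image.mp hb
      exact WithTop.coe_le_coe.mpr (h w hw)
  rw [hp_eq]
  -- helper for adjacency in the deleted graph
  have hadj' : ∀ a b : Fin n, G.Adj a b → ¬(a = x ∧ b = y) → ¬(a = y ∧ b = x) → G'.Adj a b := by
    intro a b hab h1 h2
    rw [hG'def, SimpleGraph.deleteEdges_adj]
    refine ⟨hab, ?_⟩
    simp only [Set.mem_singleton_iff, Sym2.eq_iff]
    tauto
  have hadj'' : ∀ a b : Fin n, G'.Adj a b → G.Adj a b ∧ ¬((a = x ∧ b = y) ∨ (a = y ∧ b = x)) := by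
    intro a b hab
    rw [hG'def, SimpleGraph.deleteEdges_adj] at hab
    refine ⟨hab.1, ?_⟩
    have := hab.2
    simp only [Set.mem_singleton_iff, Sym2.eq_iff] at this
    tauto
  constructor
  · -- disconnected → highPoint = dfn y
    intro hdisc w hwS
    by_contra hlt
    push_neg at hlt
    have hwny : w ≠ y := by
      intro h; rw [h] at hlt; omega
    have hw' : ∃ u : Fin n, T.IsAncestor y u ∧ G.Adj u w ∧ T.IsAncestor w u ∧ w ≠ u ∧
        T.parent u ≠ w := by
      rcases (Finset.mem_filter.mp hwS).2 with h | h
      · exact absurd h hwny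
      · exact h
    obtain ⟨u, hyu, hadjuw, hwu, hwnu, hpuw⟩ := hw'
    have hwy : T.IsAncestor w y := by
      rcases T.isAncestor_comparable hyu hwu with h | h
      · exfalso; have := dfnlt y w h hwny.symm; omega
      · exact h
    have hwx : T.IsAncestor w x := hxy ▸ T.isAncestor_parent_of_ne hwy hwny
    -- walk down inside the subtree of y
    have down : ∀ (k : ℕ) (u : Fin n), T.parent^[k] u = y → G'.Reachable y u := by
      intro k
      induction k with
      | zero => intro u h; exact h ▸ SimpleGraph.Reachable.refl _
      | succ m ih =>
        intro u h
        by_cases huy : u = y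
        · exact huy ▸ SimpleGraph.Reachable.refl _
        · have hyu' : T.IsAncestor y u := ⟨m + 1, h⟩
          have huroot : u ≠ T.root := by
            intro h0
            rw [h0, T.iterate_root] at h
            exact huy (h0.trans h)
          have hGadj : G.Adj (T.parent u) u := hspan u huroot
          have hadjG' : G'.Adj (T.parent u) u := by
            refine hadj' _ _ hGadj ?_ ?_
            · rintro ⟨_, h2⟩; exact huy h2
            · rintro ⟨_, h2⟩
              exact hyancx (h2 ▸ hyu')
          rw [Function.iterate_succ_apply] at h
          exact (ih (T.parent u) h).trans hadjG'.reachable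
    -- walk up outside the subtree of y
    have up : ∀ (k : ℕ) (v : Fin n), ¬ T.IsAncestor y v → G'.Reachable (T.parent^[k] v) v := by
      intro k v hv
      induction k with
      | zero => exact SimpleGraph.Reachable.refl _
      | succ m ih =>
        rw [Function.iterate_succ_apply']
        set a := T.parent^[m] v with ha
        have hav : T.IsAncestor a v := ⟨m, rfl⟩
        by_cases hpa : T.parent a = a
        · rw [hpa]; exact ih
        · have haroot : a ≠ T.root := fun h0 => hpa (h0 ▸ T.parent_root)
          have hGadj : G.Adj (T.parent a) a := hspan a haroot
          have hadjG' : G'.Adj (T.parent a) a := by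
            refine hadj' _ _ hGadj ?_ ?_
            · rintro ⟨_, h2⟩
              exact hv (h2 ▸ hav)
            · rintro ⟨h1, _⟩
              exact hv (T.isAncestor_trans (h1 ▸ T.isAncestor_parent a) hav)
          exact hadjG'.reachable.trans ih
    have r1 : G'.Reachable y u := by obtain ⟨k, hk⟩ := hyu; exact down k u hk
    have r2 : G'.Adj u w := by
      refine hadj' _ _ hadjuw ?_ ?_
      · rintro ⟨h1, _⟩; exact hyancx (h1 ▸ hyu)
      · rintro ⟨h1, h2⟩
        exact hpuw (by rw [h1, hxy, h2])
    have r3 : G'.Reachable w x := by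
      obtain ⟨k, hk⟩ := hwx
      exact hk ▸ up k x hyancx
    have hreach : G'.Reachable x y := ((r1.trans r2.reachable).trans r3).symm
    have hconn : G'.Connected := by
      rw [SimpleGraph.connected_iff]
      refine ⟨?_, hG.nonempty⟩
      intro a b
      obtain ⟨p⟩ := hG.preconnected a b
      induction p with
      | nil => exact SimpleGraph.Reachable.refl _
      | @cons a c b h p ih =>
        have step : G'.Reachable a c := by
          by_cases he : (a = x ∧ c = y) ∨ (a = y ∧ c = x)
          · rcases he with ⟨h1, h2⟩ | ⟨h1, h2⟩
            · exact h1 ▸ h2 ▸ hreach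
            · exact h1 ▸ h2 ▸ hreach.symm
          · push_neg at he
            exact (hadj' a c h (fun hh => he.1 hh.1 hh.2) fun hh => he.2 hh.1 hh.2).reachable
        exact step.trans ih
    exact hdisc hconn
  · -- highPoint = dfn y → disconnected
    intro hmin hconn
    have cross : ∀ a b : Fin n, G'.Adj a b → T.IsAncestor y a → T.IsAncestor y b := by
      intro a b hab hya
      obtain ⟨hGab, hne_edge⟩ := hadj'' a b hab
      by_contra hyb
      rcases hdfsProp a b hGab with h | h
      · exact hyb (T.isAncestor_trans hya h)
      · have hne : b ≠ a := hGab.ne'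
        rcases T.isAncestor_comparable hya h with hyb' | hby
        · exact hyb hyb'
        · have hbney : b ≠ y := fun e => hyb (e ▸ T.isAncestor_refl y)
          have hpab : T.parent a ≠ b := by
            intro hp
            by_cases hay : a = y
            · subst hay
              rw [hxy] at hp
              exact hne_edge (Or.inr ⟨rfl, hp.symm⟩)
            · exact hyb (hp ▸ T.isAncestor_parent_of_ne hya (Ne.symm hay))
          have hbS : b ∈ S := by
            rw [hSdef, Finset.mem_filter]
            exact ⟨Finset.mem_univ _, Or.inr ⟨a, hya, hGab, h, hne, hpab⟩⟩
          have h1 := hmin b hbS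
          have h2 := dfnlt b y hby hbney
          omega
    have walkinv : ∀ (a b : Fin n) (p : G'.Walk a b), T.IsAncestor y a → T.IsAncestor y b := by
      intro a b p
      induction p with
      | nil => exact id
      | @cons a c b h p ih => exact fun hya => ih (cross a c h hya)
    obtain ⟨p⟩ := hconn.preconnected y x
    exact hyancx (walkinv y x p (T.isAncestor_refl y))
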